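/- For every automorphism f of M there exists γ* < ω₁ such that f restricted to A_α is the identity for all α ∈ [γ*, ω₁). -/

import Mathlib

noncomputable section
open Set

/-- `G` is the vector space over `ℤ/2ℤ` with basis indexed by `ℕ`. -/
abbrev G : Type := ℕ →₀ ZMod 2

/-- The basis element `xₙ`. -/
def xg (n : ℕ) : G := Finsupp.single n 1

/-- `G⁰ₙ`: the subspace generated by the `x_k` for `k ≠ n`. -/
def G0 (n : ℕ) : Set G :=
  (Submodule.span (ZMod 2) {y : G | ∃ k : ℕ, k ≠ n ∧ y = xg k} : Submodule (ZMod 2) G)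

/-- `G¹ₙ = xₙ + G⁰ₙ`, the nontrivial coset. -/
def G1 (n : ℕ) : Set G := (fun z => xg n + z) '' G0 n

/-- The family `𝒢 = {Gˡₙ : n < ω, l ∈ {0,1}}`. -/
def Gfam : Set (Set G) := {S | ∃ n : ℕ, S = G0 n ∨ S = G1 n}

/-- The first uncountable ordinal. -/
def omega1 : Ordinal := (Cardinal.aleph 1).ord

/-- The universe of the structure `M`: elements of the parts `A_α = {α} × G`
and of the parts `B_α ⊆ {η : α → 𝒢}` (sequences are padded by `∅` beyond `α`). -/
inductive MU : Type 1 where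
  | a : Ordinal → G → MU
  | b : Ordinal → (Ordinal → Set G) → MU

/-- The condition for `η` (as a total function, padded by `∅`) to code a member of `B_α`:
its values below `α` are in `𝒢` and for some `n` it equals `G⁰ₙ` with finitely many
exceptions. -/
def okB (α : Ordinal) (η : Ordinal → Set G) : Prop :=
  (∀ β, β < α → η β ∈ Gfam) ∧ (∀ β, ¬ β < α → η β = ∅) ∧
    ∃ n : ℕ, {β : Ordinal | β < α ∧ η β ≠ G0 n}.Finite

/-- The universe of `M_{<γ}`, i.e. `∪ {A_β ∪ B_β : β < γ}`. -/
def MUuniv (γ : Ordinal) : Set MU :=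
  {u | match u with
       | .a α _ => α < γ
       | .b α η => α < γ ∧ okB α η}

/-- `u` belongs to the `A`-part (the predicate `P₁`; `P₂` is its negation). -/
def isA : MU → Prop
  | .a _ _ => True
  | .b _ _ => False

/-- The index `α` of the part `A_α` or `B_α` containing the element. -/
def idx : MU → Ordinal
  | .a α _ => α
  | .b α _ => α

/-- The relation `E₁`. -/
def E1 (u v : MU) : Prop := isA u ∧ isA v ∧ idx u ≤ idx v

/-- The relation `E₂`. -/
def E2 (u v : MU) : Prop := ¬ isA u ∧ ¬ isA v ∧ idx u ≤ idx v

/-- The unary function `F_y`: translation by `y` on each `A_α`, identity on each `B_α`. -/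
def Fy (y : G) : MU → MU
  | .a α g => .a α (g + y)
  | .b α η => .b α η

/-- The relation `R = {(η, (α,x)) : α < lh η, x ∈ η(α)}`. -/
def Rmem (u v : MU) : Prop :=
  ∃ (β : Ordinal) (η : Ordinal → Set G) (α : Ordinal) (g : G),
    u = .b β η ∧ v = .a α g ∧ α < β ∧ g ∈ η α

/-- `f` is an automorphism of the restriction of `M` to the set `S`. -/
structure IsAut (S : Set MU) (f : MU → MU) : Prop where
  bij : Set.BijOn f S S
  p1 : ∀ u ∈ S, (isA (f u) ↔ isA u)
  e1 : ∀ u ∈ S, ∀ v ∈ S, (E1 (f u) (f v) ↔ E1 u v)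
  e2 : ∀ u ∈ S, ∀ v ∈ S, (E2 (f u) (f v) ↔ E2 u v)
  fy : ∀ (y : G), ∀ u ∈ S, f (Fy y u) = Fy y (f u)
  r : ∀ u ∈ S, ∀ v ∈ S, (Rmem (f u) (f v) ↔ Rmem u v)

/-- The map `f_ν`: translation by `ν(α)` on `A_α`, coset translation on the `B`-parts. -/
def fnu (ν : Ordinal → G) : MU → MU
  | .a α g => .a α (g + ν α)
  | .b α η => .b α (fun β => (fun z => ν β + z) '' η β)

/-- The support-finiteness condition on `ν : γ → G`:
for every `β < γ` and every `n`, `{α < β : n ∈ supp ν(α)}` is finite. -/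
def SuppFin (γ : Ordinal) (ν : Ordinal → G) : Prop :=
  ∀ β < γ, ∀ n : ℕ, {α : Ordinal | α < β ∧ n ∈ (ν α).support}.Finite

/-! ### Auxiliary lemmas -/

lemma zero_mem_G0 (n : ℕ) : (0 : G) ∈ G0 n := Submodule.zero_mem _

lemma apply_eq_zero_of_mem_G0 {n : ℕ} {z : G} (hz : z ∈ G0 n) : z n = 0 := by
  have hle : Submodule.span (ZMod 2) {y : G | ∃ k : ℕ, k ≠ n ∧ y = xg k} ≤
      LinearMap.ker (Finsupp.lapply (M := ZMod 2) (R := ZMod 2) n) := by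
    rw [Submodule.span_le]
    rintro y ⟨k, hk, rfl⟩
    simp [LinearMap.mem_ker, Finsupp.lapply, xg, Finsupp.single_eq_of_ne' hk]
  have := hle hz
  simpa [LinearMap.mem_ker, Finsupp.lapply] using this

lemma mem_MUuniv_a {γ α : Ordinal} {g : G} : MU.a α g ∈ MUuniv γ ↔ α < γ := Iff.rfl

lemma mem_MUuniv_b {γ α : Ordinal} {η : Ordinal → Set G} :
    MU.b α η ∈ MUuniv γ ↔ α < γ ∧ okB α η := Iff.rfl

lemma G_add_self (x : G) : x + x = 0 := by
  ext k
  have h : ∀ a : ZMod 2, a + a = 0 := by decide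
  simpa using h (x k)

lemma G_exists_coord_one {x : G} (hx : x ≠ 0) : ∃ n, x n = 1 := by
  obtain ⟨k, hk⟩ : ∃ k, x k ≠ 0 := by
    by_contra h
    push_neg at h
    exact hx (by ext k; simpa using h k)
  have h : ∀ a : ZMod 2, a ≠ 0 → a = 1 := by decide
  exact ⟨k, h _ hk⟩

lemma omega1_isLimit : Order.IsSuccLimit omega1 :=
  Cardinal.isSuccLimit_ord (Cardinal.aleph0_le_aleph 1)

lemma omega1_succ_lt {α : Ordinal} (h : α < omega1) : α + 1 < omega1 := by
  rw [Ordinal.add_one_eq_succ]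
  exact omega1_isLimit.succ_lt h

lemma omega1_iSup_lt {g : ℕ → Ordinal.{0}} (h : ∀ i, g i < omega1.{0}) :
    (⨆ i, g i) < omega1.{0} := by
  unfold omega1 at h ⊢
  refine Cardinal.iSup_lt_ord_of_isRegular (f := g) Cardinal.isRegular_aleph_one ?_ h
  rw [Cardinal.mk_nat]
  exact Cardinal.aleph0_lt_aleph_one

/-- For every automorphism `f` of `M` there exists `γ* < ω₁` such
that `f` restricted to `A_α` is the identity for all `α ∈ [γ*, ω₁)`. -/
theorem stmt9 (f : MU → MU) (hf : IsAut (MUuniv omega1) f) :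
    ∃ γ < omega1, ∀ α, γ ≤ α → α < omega1 → ∀ g : G, f (.a α g) = .a α g := by
  classical
  have ma : ∀ (α : Ordinal) (g : G), α < omega1 → MU.a α g ∈ MUuniv omega1 := fun _ _ h => h
  -- the image of an A-element is an A-element with index < ω₁
  have hA : ∀ α, α < omega1 → ∀ g : G, ∃ β h, f (MU.a α g) = MU.a β h ∧ β < omega1 := by
    intro α hα g
    have hm : f (MU.a α g) ∈ MUuniv omega1 := hf.bij.mapsTo (ma α g hα)
    have hA' : isA (f (MU.a α g)) := (hf.p1 _ (ma α g hα)).2 trivial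
    rcases hfa : f (MU.a α g) with ⟨β, h⟩ | ⟨β, η⟩
    · exact ⟨β, h, rfl, by rw [hfa] at hm; exact hm⟩
    · rw [hfa] at hA'
      exact (hA' : False).elim
  -- the image index does not depend on the group element
  have hidx : ∀ α, α < omega1 → ∀ g g' : G,
      idx (f (MU.a α g)) = idx (f (MU.a α g')) := by
    intro α hα g g'
    have h1 := (hf.e1 (.a α g) (ma α g hα) (.a α g') (ma α g' hα)).2
      ⟨trivial, trivial, le_rfl⟩
    have h2 := (hf.e1 (.a α g') (ma α g' hα) (.a α g) (ma α g hα)).2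
      ⟨trivial, trivial, le_rfl⟩
    exact le_antisymm h1.2.2 h2.2.2
  set pi : Ordinal → Ordinal := fun α => idx (f (MU.a α 0)) with hpidef
  have hAisA : ∀ α, α < omega1 → isA (f (MU.a α 0)) := by
    intro α hα
    exact (hf.p1 _ (ma α 0 hα)).2 trivial
  -- pi is monotone (iff-monotone)
  have hmono : ∀ α β, α < omega1 → β < omega1 → (α ≤ β ↔ pi α ≤ pi β) := by
    intro α β hα hβ
    have he := hf.e1 (.a α 0) (ma α 0 hα) (.a β 0) (ma β 0 hβ)
    constructor
    · intro h
      exact (he.2 ⟨trivial, trivial, h⟩).2.2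
    · intro h
      exact (he.1 ⟨hAisA α hα, hAisA β hβ, h⟩).2.2
  have hpilt : ∀ α, α < omega1 → pi α < omega1 := by
    intro α hα
    obtain ⟨β, h, he, hβ⟩ := hA α hα 0
    have : pi α = β := by rw [hpidef]; simp only; rw [he]; rfl
    rw [this]; exact hβ
  -- pi is surjective onto ω₁
  have hsurj : ∀ β, β < omega1 → ∃ α, α < omega1 ∧ pi α = β := by
    intro β hβ
    obtain ⟨u, hu, hfu⟩ := hf.bij.surjOn (ma β 0 hβ)
    have hAu : isA u := (hf.p1 u hu).1 (by rw [hfu]; trivial)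
    cases u with
    | a α g =>
      refine ⟨α, hu, ?_⟩
      have h1 : pi α = idx (f (MU.a α g)) := hidx α hu 0 g
      rw [h1, hfu]; rfl
    | b α η => exact (hAu : False).elim
  -- pi is the identity
  have hpi : ∀ α, α < omega1 → pi α = α := by
    intro α
    induction α using Ordinal.induction with
    | h α IH =>
      intro hα
      have hπα : pi α < omega1 := hpilt α hα
      rcases lt_trichotomy (pi α) α with hlt | heq | hgt
      · have h1 : pi (pi α) = pi α := IH _ hlt hπα
        have h2 : α ≤ pi α := (hmono α (pi α) hα hπα).2 h1.ge
        exact absurd hlt (not_lt.2 h2)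
      · exact heq
      · obtain ⟨β, hβ, hpiβ⟩ := hsurj α hα
        have hβα : β < α := by
          by_contra hge
          push_neg at hge
          have h1 := (hmono α β hα hβ).1 hge
          rw [hpiβ] at h1
          exact absurd (lt_of_lt_of_le hgt h1) (lt_irrefl _)
        have h2 := IH β hβα hβ
        rw [h2] at hpiβ
        exact absurd hpiβ (ne_of_lt hβα)
  -- f acts on A_α by translation by c α
  have hc : ∀ α : Ordinal, ∃ cg : G, α < omega1 → ∀ g : G,
      f (MU.a α g) = MU.a α (g + cg) := by
    intro α
    by_cases hα : α < omega1
    · obtain ⟨β, cg, he, hβ⟩ := hA α hα 0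
      have hβα : β = α := by
        have h1 := hpi α hα
        have h2 : pi α = β := by rw [hpidef]; simp only; rw [he]; rfl
        rw [h2] at h1; exact h1
      subst hβα
      refine ⟨cg, fun _ g => ?_⟩
      have hFy := hf.fy g (.a β 0) (ma β 0 hα)
      have h0 : Fy g (MU.a β 0) = MU.a β g := by simp [Fy]
      rw [h0, he] at hFy
      rw [hFy]
      simp [Fy, add_comm]
    · exact ⟨0, fun h => absurd h hα⟩
  choose c hcp using hc
  by_contra hcon
  push_neg at hcon
  -- c α ≠ 0 unboundedly often
  have hS : ∀ γ, γ < omega1 → ∃ α, γ ≤ α ∧ α < omega1 ∧ c α ≠ 0 := by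
    intro γ hγ
    obtain ⟨α, h1, h2, g, hg⟩ := hcon γ hγ
    refine ⟨α, h1, h2, fun h0 => hg ?_⟩
    rw [hcp α h2 g, h0, add_zero]
  -- pigeonhole: some coordinate n is 1 unboundedly often
  obtain ⟨n, hn⟩ : ∃ n : ℕ, ∀ γ, γ < omega1 → ∃ α, γ ≤ α ∧ α < omega1 ∧ c α n = 1 := by
    by_contra hno
    push_neg at hno
    choose γs h1 h2 using hno
    have hΓ : (⨆ k, γs k) < omega1 := omega1_iSup_lt h1
    obtain ⟨α, hΓα, hα, hcα⟩ := hS _ hΓ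
    obtain ⟨m, hm⟩ := G_exists_coord_one hcα
    exact h2 m α (le_trans (Ordinal.le_iSup γs m) hΓα) hα hm
  -- the set T of such α is infinite
  set T : Set Ordinal := {α | α < omega1 ∧ c α n = 1} with hTdef
  have hTinf : T.Infinite := by
    intro hfin
    rcases Set.eq_empty_or_nonempty T with he | hne
    · obtain ⟨α, _, hα, h1⟩ := hn 0 omega1_isLimit.pos
      have : α ∈ T := ⟨hα, h1⟩
      rw [he] at this
      exact this
    · have hmem := hne.csSup_mem hfin
      obtain ⟨hlt, -⟩ := hmem
      obtain ⟨α, hge, hα, h1⟩ := hn (sSup T + 1) (omega1_succ_lt hlt)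
      have hle : α ≤ sSup T := le_csSup hfin.bddAbove ⟨hα, h1⟩
      have hlt2 : sSup T < α := lt_of_lt_of_le
        (by rw [Ordinal.add_one_eq_succ]; exact Order.lt_succ _) hge
      exact absurd hle (not_le.2 hlt2)
  set emb := Set.Infinite.natEmbedding T hTinf with hembdef
  set sq : ℕ → Ordinal := fun i => (emb i).1 with hsqdef
  have hsqmem : ∀ i, sq i < omega1 ∧ c (sq i) n = 1 := fun i => (emb i).2
  have hsqinj : Function.Injective sq := fun i j h =>
    emb.injective (Subtype.coe_injective h)
  -- δ is above all the sq i, and below ω₁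
  set δ : Ordinal := ⨆ i, (sq i + 1) with hδdef
  have hδ : δ < omega1 := omega1_iSup_lt fun i => omega1_succ_lt (hsqmem i).1
  have hαδ : ∀ i, sq i < δ := fun i =>
    lt_of_lt_of_le (by rw [Ordinal.add_one_eq_succ]; exact Order.lt_succ _)
      (Ordinal.le_iSup _ i)
  -- the B-element with constant value G0 n below δ
  set η : Ordinal → Set G := fun β => if β < δ then G0 n else (∅ : Set G) with hηdef
  have hok : okB δ η := by
    refine ⟨fun β hβ => ?_, fun β hβ => if_neg hβ, n, ?_⟩
    · rw [hηdef]; simp only [if_pos hβ]; exact ⟨n, Or.inl rfl⟩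
    · have : {β : Ordinal | β < δ ∧ η β ≠ G0 n} = ∅ := by
        ext β
        simp only [Set.mem_setOf_eq, Set.mem_empty_iff_false, iff_false, not_and]
        intro hβ
        rw [hηdef]; simp [if_pos hβ]
      rw [this]; exact Set.finite_empty
  have hbu : MU.b δ η ∈ MUuniv omega1 := ⟨hδ, hok⟩
  have hfbmem : f (MU.b δ η) ∈ MUuniv omega1 := hf.bij.mapsTo hbu
  have hnotA : ¬ isA (f (MU.b δ η)) := fun h => ((hf.p1 _ hbu).1 h : False)
  rcases hfb : f (MU.b δ η) with ⟨β₀, g₀⟩ | ⟨δ', η'⟩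
  · rw [hfb] at hnotA
    exact hnotA trivial
  · rw [hfb] at hfbmem
    obtain ⟨hδ', hok'⟩ := hfbmem
    obtain ⟨-, -, m, hfin⟩ := hok'
    have key : ∀ i, sq i < δ' ∧ η' (sq i) ≠ G0 m := by
      intro i
      obtain ⟨hiω, hi1⟩ := hsqmem i
      have hR1 : Rmem (MU.b δ η) (MU.a (sq i) 0) := by
        refine ⟨δ, η, sq i, 0, rfl, rfl, hαδ i, ?_⟩
        rw [hηdef]; simp only [if_pos (hαδ i)]
        exact zero_mem_G0 n
      have hR2 : Rmem (f (MU.b δ η)) (f (MU.a (sq i) 0)) :=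
        (hf.r _ hbu _ (ma _ 0 hiω)).2 hR1
      rw [hfb, hcp _ hiω 0, zero_add] at hR2
      obtain ⟨β₂, η₂, α₂, g₂, he1, he2, hlt2, hmem2⟩ := hR2
      injection he1 with he1a he1b
      injection he2 with he2a he2b
      subst he1a; subst he1b; subst he2a; subst he2b
      refine ⟨hlt2, fun hG0m => ?_⟩
      -- reverse direction with g = c (sq i)
      have hR3 : Rmem (f (MU.b δ η)) (f (MU.a (sq i) (c (sq i)))) := by
        rw [hfb, hcp _ hiω, G_add_self]
        refine ⟨δ', η', sq i, 0, rfl, rfl, hlt2, ?_⟩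
        rw [hG0m]
        exact zero_mem_G0 m
      have hR4 := (hf.r _ hbu _ (ma _ _ hiω)).1 hR3
      obtain ⟨β₃, η₃, α₃, g₃, he1, he2, hlt3, hmem3⟩ := hR4
      injection he1 with he1a he1b
      injection he2 with he2a he2b
      subst he1a; subst he1b; subst he2a; subst he2b
      have hmem4 : c (sq i) ∈ G0 n := by
        rw [hηdef] at hmem3
        simp only [if_pos (hαδ i)] at hmem3
        exact hmem3
      have h0 := apply_eq_zero_of_mem_G0 hmem4
      rw [hi1] at h0
      exact absurd h0 (by decide)
    have hinf : {β : Ordinal | β < δ' ∧ η' β ≠ G0 m}.Infinite :=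
      Set.infinite_of_injective_forall_mem hsqinj key
    exact hinf hfin
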